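/- Behavior under reflection of the ordering (Proposition, part 2): let G be a Gauss diagram on n strings and let Ḡ be the Gauss diagram obtained from G by reversing the ordering of the strings, i.e., string k of Ḡ is string n+1−k of G, with all arrows, endpoint orders and signs retained. For i ∈ {1,…,n} write ī := n+1−i, and for I = {i_1 < … < i_r} with j ∉ I write Ī := {ī : i ∈ I} and j̄ := n+1−j. Then Z_{I,j}(Ḡ) = (−1)^r · Z_{Ī, j̄}(G). -/

import Mathlib

/-!
Combinatorial Gauss diagrams on `n` strings and the tree invariants `Z I j`.

A Gauss diagram is encoded by a finite set of arrows; each arrow records the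
string (an element of `Fin n`) and the position (a rational number, increasing
in the direction of the orientation of the string) of its tail and of its head,
together with a sign `±1`.  Only the induced combinatorial data (linear order of
the endpoints along each string, the tail/head pairing and the signs) is ever
used by the definitions below.

The tree invariant `Z I j G = ∑_{A ∈ 𝒜_{I,j}} sign(A) ⟨A, G⟩` is computed as a
signed count over all subsets `S` of the arrows of `G` that form a planar tree
diagram with leaves on `I` and trunk on `j`: each pair `(A, φ)` of a planar tree
diagram `A ∈ 𝒜_{I,j}` together with an embedding `φ : A → G` corresponds
bijectively to the subset `S = Im φ` of the arrows of `G`, which is itself a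
planar tree diagram with leaves on `I` and trunk on `j`; the contribution of the
pair to the sum is `sign(A) · sign(φ) = (-1)^{#right-pointing arrows of S} · ∏_{a ∈ S} sign(a)`.
-/

open scoped Classical

/-- An arrow of a Gauss diagram on `n` strings: a tail endpoint, a head
endpoint (each given by the string it lies on and its position along that
string) and a sign. -/
structure GArrow (n : ℕ) where
  tailStr : Fin n
  tailPos : ℚ
  headStr : Fin n
  headPos : ℚ
  sign : ℤ
deriving DecidableEq

namespace GArrow

/-- The two endpoints of an arrow: `false` is the tail, `true` is the head. -/
def ep {n : ℕ} (a : GArrow n) : Bool → Fin n × ℚ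
  | false => (a.tailStr, a.tailPos)
  | true => (a.headStr, a.headPos)

end GArrow

/-- A Gauss diagram on `n` strings: a finite set of signed arrows with all
endpoints pairwise distinct, and all signs equal to `±1`. -/
structure GaussDiagram (n : ℕ) where
  arrows : Finset (GArrow n)
  sign_pm : ∀ a ∈ arrows, a.sign = 1 ∨ a.sign = -1
  endpoints_distinct : ∀ a ∈ arrows, ∀ b ∈ arrows, ∀ s t : Bool,
    a.ep s = b.ep t → a = b ∧ s = t

/-- `S` is a tree diagram with leaves on `I` and trunk on `j`:
* the head and the tail of every arrow lie on different strings;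
* for each `i ∈ I` there is exactly one arrow tail on string `i`, and there are
  no arrow tails on strings outside `I`;
* every arrow head lies on a string of `I ∪ {j}`;
* on each string `i ∈ I` all arrow heads precede the unique arrow tail. -/
def IsTreeDiagram {n : ℕ} (I : Finset (Fin n)) (j : Fin n)
    (S : Finset (GArrow n)) : Prop :=
  (∀ a ∈ S, a.tailStr ≠ a.headStr) ∧
  (∀ i ∈ I, ∃! a, a ∈ S ∧ a.tailStr = i) ∧
  (∀ a ∈ S, a.tailStr ∈ I) ∧
  (∀ a ∈ S, a.headStr ∈ I ∨ a.headStr = j) ∧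
  (∀ a ∈ S, ∀ b ∈ S, a.headStr = b.tailStr → a.headPos < b.tailPos)

/-- `ParentRel S s t` : string `s` is the parent of string `t` in the rooted
tree determined by the tree diagram `S`, i.e. the (unique) arrow with tail on
`t` has its head on `s`. -/
def ParentRel {n : ℕ} (S : Finset (GArrow n)) (s t : Fin n) : Prop :=
  ∃ a ∈ S, a.tailStr = t ∧ a.headStr = s

/-- `Descends S s k` : string `k` belongs to the subtree of string `s` (it is
`s` itself or an iterated child of `s`). -/
def Descends {n : ℕ} (S : Finset (GArrow n)) : Fin n → Fin n → Prop :=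
  Relation.ReflTransGen (ParentRel S)

/-- `S` is a *planar* tree diagram with leaves on `I` and trunk on `j`: the
rooted tree `T_S` determined by `S` can be drawn in the plane so that the
clockwise order of its leaves, starting from the root on string `j`, is the
order of the string numbers.  Combinatorially this says that:
* the parent relation makes the strings carrying the arrows into a tree rooted
  at `j` (every leaf string is an iterated child of `j`);
* the whole subtree hanging from an arrow lies on the same side of the string
  carrying the head of that arrow as its tail does;
* two subtrees hanging on the same side of a common string are ordered, along
  that string, compatibly with the order of the strings: for two arrow heads on
  the same string, with both tails on the left, the subtree attached closer to
  the beginning of the string is the one carrying the larger string numbers,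
  while for two tails on the right it is the one carrying the smaller string
  numbers. -/
def IsPlanarTreeDiagram {n : ℕ} (I : Finset (Fin n)) (j : Fin n)
    (S : Finset (GArrow n)) : Prop :=
  IsTreeDiagram I j S ∧
  (∀ i ∈ I, Relation.TransGen (ParentRel S) j i) ∧
  (∀ a ∈ S, ∀ k : Fin n, Descends S a.tailStr k →
    (a.tailStr < a.headStr ↔ k < a.headStr)) ∧
  (∀ a ∈ S, ∀ b ∈ S, a.headStr = b.headStr → a.headPos < b.headPos →
    ∀ k k' : Fin n, Descends S a.tailStr k → Descends S b.tailStr k' →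
      ((a.tailStr < a.headStr → b.tailStr < b.headStr → k' < k) ∧
       (a.headStr < a.tailStr → b.headStr < b.tailStr → k < k')))

/-- The sign `(-1)^q` of an (embedded) arrow diagram, where `q` is the number
of right-pointing arrows (tail on a string of smaller number than the head). -/
noncomputable def treeSign {n : ℕ} (S : Finset (GArrow n)) : ℤ :=
  (-1) ^ (S.filter fun a => a.tailStr < a.headStr).card

/-- The tree invariant `Z_{I,j}(G) = ∑_{A ∈ 𝒜_{I,j}} sign(A)·⟨A,G⟩`, computed
as the signed count of embedded planar tree diagrams with leaves on `I` and
trunk on `j` inside `G`.  In particular `Z ∅ j G = 1` (only `S = ∅`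
contributes). -/
noncomputable def Z {n : ℕ} (I : Finset (Fin n)) (j : Fin n)
    (G : GaussDiagram n) : ℤ :=
  ∑ S ∈ G.arrows.powerset,
    if IsPlanarTreeDiagram I j S then treeSign S * ∏ a ∈ S, a.sign else 0


section Aux

variable {n : ℕ}

/-- The reflection map on arrows. -/
def rmap (a : GArrow n) : GArrow n :=
  ⟨a.tailStr.rev, a.tailPos, a.headStr.rev, a.headPos, a.sign⟩

lemma rmap_rmap (a : GArrow n) : rmap (rmap a) = a := by
  cases a; simp [rmap]

lemma rmap_inj : Function.Injective (rmap (n := n)) :=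
  Function.LeftInverse.injective rmap_rmap

lemma image_rmap_image_rmap (S : Finset (GArrow n)) :
    (S.image rmap).image rmap = S := by
  rw [Finset.image_image, show rmap ∘ rmap = (id : GArrow n → GArrow n) from
    funext rmap_rmap, Finset.image_id]

lemma image_rev_image_rev (I : Finset (Fin n)) :
    (I.image Fin.rev).image Fin.rev = I := by
  rw [Finset.image_image, show Fin.rev ∘ Fin.rev = (id : Fin n → Fin n) from
    funext Fin.rev_rev, Finset.image_id]

lemma parentRel_rmap {S : Finset (GArrow n)} {s t : Fin n}
    (h : ParentRel S s t) : ParentRel (S.image rmap) s.rev t.rev := by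
  obtain ⟨a, ha, h1, h2⟩ := h
  exact ⟨rmap a, Finset.mem_image_of_mem _ ha, by simp [rmap, h1], by simp [rmap, h2]⟩

lemma descends_rmap {S : Finset (GArrow n)} {s t : Fin n} (h : Descends S s t) :
    Descends (S.image rmap) s.rev t.rev :=
  Relation.ReflTransGen.lift (r := ParentRel S) (p := ParentRel (S.image rmap)) Fin.rev
    (fun _ _ hab => parentRel_rmap hab : ∀ a b, ParentRel S a b → ParentRel (S.image rmap) a.rev b.rev) _ _ h

lemma descends_rmap_rev {S : Finset (GArrow n)} {s t : Fin n}
    (h : Descends (S.image rmap) s t) : Descends S s.rev t.rev := by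
  have h2 := descends_rmap h
  rwa [image_rmap_image_rmap] at h2

lemma transGen_parentRel_rmap {S : Finset (GArrow n)} {s t : Fin n}
    (h : Relation.TransGen (ParentRel S) s t) :
    Relation.TransGen (ParentRel (S.image rmap)) s.rev t.rev :=
  Relation.TransGen.lift (r := ParentRel S) (p := ParentRel (S.image rmap)) Fin.rev
    (fun _ _ hab => parentRel_rmap hab : ∀ a b, ParentRel S a b → ParentRel (S.image rmap) a.rev b.rev) _ _ h

lemma no_cycle {α : Type*} {r : α → α → Prop}
    (cofun : ∀ s s' t, r s t → r s' t → s = s') {j : α} (hj : ∀ s, ¬ r s j) :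
    ∀ t, Relation.ReflTransGen r j t → ¬ Relation.TransGen r t t := by
  intro t h
  induction h with
  | refl =>
    intro hc
    obtain ⟨b, _, hb⟩ := Relation.TransGen.tail'_iff.mp hc
    exact hj b hb
  | @tail b c h1 h2 ih =>
    intro hc
    obtain ⟨s, hs1, hs2⟩ := Relation.TransGen.tail'_iff.mp hc
    have hsb : s = b := cofun s b c hs2 h2
    subst hsb
    exact ih (Relation.TransGen.head' h2 hs1)

lemma parent_unique {I : Finset (Fin n)} {j : Fin n} {S : Finset (GArrow n)}
    (hS : IsTreeDiagram I j S) :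
    ∀ s s' t, ParentRel S s t → ParentRel S s' t → s = s' := by
  rintro s s' t ⟨a, ha, ha1, ha2⟩ ⟨b, hb, hb1, hb2⟩
  have htI : t ∈ I := ha1 ▸ hS.2.2.1 a ha
  obtain ⟨c, _, hc⟩ := hS.2.1 t htI
  have h1 := hc a ⟨ha, ha1⟩
  have h2 := hc b ⟨hb, hb1⟩
  rw [← ha2, ← hb2, h1, h2]

lemma no_parent_root {I : Finset (Fin n)} {j : Fin n} {S : Finset (GArrow n)}
    (hS : IsTreeDiagram I j S) (hj : j ∉ I) :
    ∀ s, ¬ ParentRel S s j := by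
  rintro s ⟨a, ha, h1, h2⟩
  exact hj (h1 ▸ hS.2.2.1 a ha)

lemma not_descends_head {I : Finset (Fin n)} {j : Fin n} {S : Finset (GArrow n)}
    (hS : IsPlanarTreeDiagram I j S) (hj : j ∉ I) {a : GArrow n} (ha : a ∈ S) :
    ¬ Descends S a.tailStr a.headStr := by
  intro hd
  have hreach : Relation.ReflTransGen (ParentRel S) j a.headStr := by
    rcases hS.1.2.2.2.1 a ha with hh | hh
    · exact (hS.2.1 a.headStr hh).to_reflTransGen
    · rw [hh]
  have hcyc : Relation.TransGen (ParentRel S) a.headStr a.headStr :=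
    Relation.TransGen.head' ⟨a, ha, rfl, rfl⟩ hd
  exact no_cycle (parent_unique hS.1) (no_parent_root hS.1 hj) _ hreach hcyc

lemma planar_rmap {I : Finset (Fin n)} {j : Fin n} {S : Finset (GArrow n)}
    (hj : j ∉ I) (hS : IsPlanarTreeDiagram I j S) :
    IsPlanarTreeDiagram (I.image Fin.rev) j.rev (S.image rmap) := by
  refine ⟨⟨?_, ?_, ?_, ?_, ?_⟩, ?_, ?_, ?_⟩
  · intro a ha
    obtain ⟨b, hb, rfl⟩ := Finset.mem_image.mp ha
    simpa [rmap, Fin.rev_inj] using hS.1.1 b hb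
  · intro i hi
    obtain ⟨i', hi', rfl⟩ := Finset.mem_image.mp hi
    obtain ⟨a, ⟨haS, hat⟩, hu⟩ := hS.1.2.1 i' hi'
    refine ⟨rmap a, ⟨Finset.mem_image_of_mem _ haS, by simp [rmap, hat]⟩, ?_⟩
    rintro b ⟨hbS, hbt⟩
    obtain ⟨c, hc, rfl⟩ := Finset.mem_image.mp hbS
    have hct : c.tailStr = i' := by simpa [rmap, Fin.rev_inj] using hbt
    rw [hu c ⟨hc, hct⟩]
  · intro a ha
    obtain ⟨b, hb, rfl⟩ := Finset.mem_image.mp ha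
    exact Finset.mem_image_of_mem _ (hS.1.2.2.1 b hb)
  · intro a ha
    obtain ⟨b, hb, rfl⟩ := Finset.mem_image.mp ha
    rcases hS.1.2.2.2.1 b hb with hh | hh
    · exact Or.inl (Finset.mem_image_of_mem _ hh)
    · exact Or.inr (by simp [rmap, hh])
  · intro a ha b hb hab
    obtain ⟨a', ha', rfl⟩ := Finset.mem_image.mp ha
    obtain ⟨b', hb', rfl⟩ := Finset.mem_image.mp hb
    have : a'.headStr = b'.tailStr := Fin.rev_inj.mp (by simpa [rmap] using hab)
    simpa [rmap] using hS.1.2.2.2.2 a' ha' b' hb' this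
  · intro i hi
    obtain ⟨i', hi', rfl⟩ := Finset.mem_image.mp hi
    exact transGen_parentRel_rmap (hS.2.1 i' hi')
  · intro a ha k hk
    obtain ⟨a', ha', rfl⟩ := Finset.mem_image.mp ha
    have hk' : Descends S a'.tailStr k.rev := by
      have := descends_rmap_rev (S := S) hk
      simpa [rmap, Fin.rev_rev] using this
    have horig := hS.2.2.1 a' ha' k.rev hk'
    have hth : a'.tailStr ≠ a'.headStr := hS.1.1 a' ha'
    have hkh : k.rev ≠ a'.headStr := fun he => not_descends_head hS hj ha' (he ▸ hk')
    simp only [rmap]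
    have e1 : (a'.tailStr : ℕ) ≠ (a'.headStr : ℕ) := Fin.val_ne_iff.mpr hth
    have e2 : ((k.rev : Fin n) : ℕ) ≠ (a'.headStr : ℕ) := Fin.val_ne_iff.mpr hkh
    simp only [Fin.lt_def, Fin.val_rev] at horig e2 ⊢
    have t1 := a'.tailStr.is_lt
    have t2 := a'.headStr.is_lt
    have t3 := k.is_lt
    omega
  · intro a ha b hb hhead hpos k k' hk hk'
    obtain ⟨a', ha', rfl⟩ := Finset.mem_image.mp ha
    obtain ⟨b', hb', rfl⟩ := Finset.mem_image.mp hb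
    have hhead' : a'.headStr = b'.headStr := Fin.rev_inj.mp (by simpa [rmap] using hhead)
    have hpos' : a'.headPos < b'.headPos := by simpa [rmap] using hpos
    have hka : Descends S a'.tailStr k.rev := by
      have := descends_rmap_rev (S := S) hk
      simpa [rmap, Fin.rev_rev] using this
    have hkb : Descends S b'.tailStr k'.rev := by
      have := descends_rmap_rev (S := S) hk'
      simpa [rmap, Fin.rev_rev] using this
    have horig := hS.2.2.2 a' ha' b' hb' hhead' hpos' k.rev k'.rev hka hkb
    constructor
    · intro h1 h2
      have h1' : a'.headStr < a'.tailStr := by simpa [rmap, Fin.rev_lt_rev] using h1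
      have h2' : b'.headStr < b'.tailStr := by simpa [rmap, Fin.rev_lt_rev] using h2
      exact Fin.rev_lt_rev.mp (horig.2 h1' h2')
    · intro h1 h2
      have h1' : a'.tailStr < a'.headStr := by simpa [rmap, Fin.rev_lt_rev] using h1
      have h2' : b'.tailStr < b'.headStr := by simpa [rmap, Fin.rev_lt_rev] using h2
      exact Fin.rev_lt_rev.mp (horig.1 h1' h2')

lemma planar_rmap_iff {I : Finset (Fin n)} {j : Fin n} {S : Finset (GArrow n)}
    (hj : j ∉ I) :
    IsPlanarTreeDiagram I j S ↔
      IsPlanarTreeDiagram (I.image Fin.rev) j.rev (S.image rmap) := by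
  constructor
  · exact planar_rmap hj
  · intro hP
    have hj' : j.rev ∉ I.image Fin.rev := by
      intro hmem
      exact hj (by simpa [Finset.mem_image, Fin.rev_inj] using hmem)
    have := planar_rmap hj' hP
    rwa [image_rev_image_rev, image_rmap_image_rmap, Fin.rev_rev] at this

lemma tree_card {I : Finset (Fin n)} {j : Fin n} {S : Finset (GArrow n)}
    (hS : IsTreeDiagram I j S) : S.card = I.card := by
  apply Finset.card_bij (fun a _ => a.tailStr)
  · exact fun a ha => hS.2.2.1 a ha
  · intro a ha b hb hab
    obtain ⟨c, _, hc⟩ := hS.2.1 a.tailStr (hS.2.2.1 a ha)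
    rw [hc a ⟨ha, rfl⟩, hc b ⟨hb, hab.symm⟩]
  · intro i hi
    obtain ⟨a, ⟨haS, hat⟩, _⟩ := hS.2.1 i hi
    exact ⟨a, haS, hat⟩

lemma filter_card_rmap {S : Finset (GArrow n)}
    (h : ∀ a ∈ S, a.tailStr ≠ a.headStr) :
    ((S.image rmap).filter fun a => a.tailStr < a.headStr).card
      + (S.filter fun a => a.tailStr < a.headStr).card = S.card := by
  have h1 : ((S.image rmap).filter fun a => a.tailStr < a.headStr)
      = (S.filter fun a => ¬ a.tailStr < a.headStr).image rmap := by
    rw [Finset.filter_image]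
    congr 1
    apply Finset.filter_congr
    intro a ha
    have hne : (a.tailStr : ℕ) ≠ (a.headStr : ℕ) := Fin.val_ne_iff.mpr (h a ha)
    simp only [rmap, Fin.lt_def, Fin.val_rev]
    have t1 := a.tailStr.is_lt
    have t2 := a.headStr.is_lt
    constructor <;> intro <;> omega
  rw [h1, Finset.card_image_of_injective _ rmap_inj, add_comm]
  exact Finset.card_filter_add_card_filter_not _

lemma treeSign_rmap {I : Finset (Fin n)} {j : Fin n} {S : Finset (GArrow n)}
    (hS : IsTreeDiagram I j S) :
    treeSign S = (-1) ^ I.card * treeSign (S.image rmap) := by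
  have key : ∀ a b : ℕ, ((-1 : ℤ)) ^ (a + b) * (-1) ^ a = (-1) ^ b := by
    intro a b
    rw [← pow_add, show a + b + a = 2 * a + b by ring, pow_add, pow_mul]
    norm_num
  have hcard := filter_card_rmap hS.1
  have hc2 := tree_card hS
  unfold treeSign
  rw [← hc2, ← hcard]
  exact (key _ _).symm

lemma prod_sign_rmap (S : Finset (GArrow n)) :
    ∏ a ∈ S.image rmap, a.sign = ∏ a ∈ S, a.sign := by
  rw [Finset.prod_image (fun a _ b _ hab => rmap_inj hab)]
  rfl

end Aux

/-- **Behavior under reflection of the ordering.**  Let `Ḡ` be obtained from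
`G` by reversing the ordering of the strings (string `k` of `Ḡ` is string
`n+1-k` of `G`, all arrows, endpoint orders and signs retained; with 0-indexed
strings the re-indexing is `Fin.rev`).  Then
`Z_{I,j}(Ḡ) = (-1)^{|I|} · Z_{Ī,j̄}(G)`. -/
theorem reflection_behavior {n : ℕ} (G Gbar : GaussDiagram n)
    (h : Gbar.arrows = G.arrows.image fun a =>
      GArrow.mk a.tailStr.rev a.tailPos a.headStr.rev a.headPos a.sign)
    (I : Finset (Fin n)) (j : Fin n) (hj : j ∉ I) :
    Z I j Gbar = (-1) ^ I.card * Z (I.image Fin.rev) j.rev G := by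
  have hmap : (fun a : GArrow n =>
      GArrow.mk a.tailStr.rev a.tailPos a.headStr.rev a.headPos a.sign) = rmap := rfl
  rw [hmap] at h
  unfold Z
  rw [Finset.mul_sum]
  refine Finset.sum_nbij' (fun S => S.image rmap) (fun S => S.image rmap)
    ?_ ?_ ?_ ?_ ?_
  · intro S hSmem
    rw [Finset.mem_powerset] at hSmem ⊢
    have := Finset.image_subset_image (f := rmap) hSmem
    rwa [h, image_rmap_image_rmap] at this
  · intro S hSmem
    rw [Finset.mem_powerset] at hSmem ⊢
    rw [h]
    exact Finset.image_subset_image hSmem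
  · intro S _
    exact image_rmap_image_rmap S
  · intro S _
    exact image_rmap_image_rmap S
  · intro S _
    by_cases hp : IsPlanarTreeDiagram I j S
    · rw [if_pos hp, if_pos ((planar_rmap_iff hj).mp hp)]
      rw [prod_sign_rmap, treeSign_rmap hp.1]
      ring
    · rw [if_neg hp, if_neg (fun hc => hp ((planar_rmap_iff hj).mpr hc)), mul_zero]
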